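/- Let T₁, ..., T_n be commuting bounded operators on a Hilbert space such that T_n is normal with T_n^* T_n = I = T_n T_n^*, and (T_n^p)^* T_j = T_{n-j}^* for j = 1, ..., n-1 (p a positive integer). Then each T_j, j = 1, ..., n-1, is a normal operator. -/
import Mathlib


open ContinuousLinearMap

/-- If `T₁,…,Tₙ` are commuting bounded operators with `Tₙ` unitary
(`Tₙ* Tₙ = 1 = Tₙ Tₙ*`) and `(Tₙ^p)* Tⱼ = T_{n-j}*` for `j = 1,…,n-1`,
then every `Tⱼ`, `j = 1,…,n-1`, is normal. -/
theorem stmt_10 {H : Type*}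
    [NormedAddCommGroup H] [InnerProductSpace ℂ H] [CompleteSpace H]
    (n p : ℕ) (hn : 1 < n) (hp : 0 < p)
    (T : ℕ → (H →L[ℂ] H))
    (hcomm : ∀ i j, 1 ≤ i → i ≤ n → 1 ≤ j → j ≤ n → T i * T j = T j * T i)
    (hTn : adjoint (T n) * T n = 1 ∧ T n * adjoint (T n) = 1)
    (hrel : ∀ j, 1 ≤ j → j ≤ n - 1 →
      adjoint ((T n) ^ p) * T j = adjoint (T (n - j))) :
    ∀ j, 1 ≤ j → j ≤ n - 1 → adjoint (T j) * T j = T j * adjoint (T j) := by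
  simp only [← ContinuousLinearMap.star_eq_adjoint] at *
  obtain ⟨h1, h2⟩ := hTn
  intro j hj1 hj2
  have hA : star ((T n) ^ p) * T j = star (T (n - j)) := hrel j hj1 hj2
  have hB : star ((T n) ^ p) * T (n - j) = star (T j) := by
    have := hrel (n - j) (by omega) (by omega)
    rwa [show n - (n - j) = j by omega] at this
  have hc : Commute (T n) (star (T n)) := by
    show T n * star (T n) = star (T n) * T n
    rw [h1, h2]
  have hUnit : (T n) ^ p * star ((T n) ^ p) = 1 := by
    rw [star_pow, ← hc.mul_pow, h2, one_pow]
  have hcjn : T (n - j) * T j = T j * T (n - j) :=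
    hcomm (n - j) j (by omega) (by omega) hj1 (by omega)
  have hTj : T j = star (T (n - j)) * (T n) ^ p := by
    have := congrArg star hB
    rw [star_mul, star_star, star_star] at this
    exact this.symm
  calc star (T j) * T j
      = star ((T n) ^ p) * (T (n - j) * T j) := by rw [← hB, mul_assoc]
    _ = star ((T n) ^ p) * (T j * T (n - j)) := by rw [hcjn]
    _ = star (T (n - j)) * T (n - j) := by rw [← mul_assoc, hA]
    _ = T j * star (T j) := by
        conv_rhs => rw [← hB, hTj]
        rw [mul_assoc, ← mul_assoc ((T n) ^ p), hUnit, one_mul]
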